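/- (Markov brothers' inequality, special case used) If p ∈ ℝ[x] has degree d and |p(x)| ≤ 1 for all x ∈ [-1,1], then |p'(x)| ≤ d² for all x ∈ [-1,1]. -/

import Mathlib

open Polynomial Real Set Finset

private lemma abs_sin_nat_mul_le (n : ℕ) (θ : ℝ) : |Real.sin (n * θ)| ≤ n * |Real.sin θ| := by
  induction n with
  | zero => simp
  | succ n ih =>
    have h : ((n+1 : ℕ) : ℝ) * θ = n*θ + θ := by push_cast; ring
    rw [h, Real.sin_add]
    calc |Real.sin (n*θ) * Real.cos θ + Real.cos (n*θ) * Real.sin θ|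
        ≤ |Real.sin (n*θ) * Real.cos θ| + |Real.cos (n*θ) * Real.sin θ| := abs_add_le _ _
      _ ≤ |Real.sin (n*θ)| * 1 + 1 * |Real.sin θ| := by
          rw [abs_mul, abs_mul]
          gcongr <;> [exact Real.abs_cos_le_one θ; exact Real.abs_cos_le_one _]
      _ ≤ n * |Real.sin θ| + 1 * |Real.sin θ| := by rw [mul_one]; gcongr
      _ = ((n+1 : ℕ) : ℝ) * |Real.sin θ| := by push_cast; ring

private lemma natDegree_T_le (n : ℕ) : (Polynomial.Chebyshev.T ℝ (n : ℤ)).natDegree ≤ n := by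
  have key : ∀ m : ℕ, (Polynomial.Chebyshev.T ℝ (m : ℤ)).natDegree ≤ m ∧
      (Polynomial.Chebyshev.T ℝ ((m+1 : ℕ) : ℤ)).natDegree ≤ m + 1 := by
    intro m
    induction m with
    | zero => constructor <;> simp [Polynomial.Chebyshev.T_zero, Polynomial.Chebyshev.T_one]
    | succ m ih =>
      refine ⟨ih.2, ?_⟩
      have h2 : ((m+1+1 : ℕ) : ℤ) = (m : ℤ) + 2 := by push_cast; ring
      rw [h2, Polynomial.Chebyshev.T_add_two]
      refine (Polynomial.natDegree_sub_le _ _).trans ?_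
      simp only [sup_le_iff]
      constructor
      · refine (Polynomial.natDegree_mul_le).trans ?_
        have h3 : ((m:ℤ)+1) = ((m+1 : ℕ) : ℤ) := by push_cast; ring
        rw [h3]
        have h1 : (2 * X : ℝ[X]).natDegree ≤ 1 := by
          refine (Polynomial.natDegree_mul_le).trans ?_
          simp
        have := ih.2
        omega
      · exact ih.1.trans (by omega)
  exact (key n).1
private lemma cheb_nodal (d : ℕ) (hd : 1 ≤ d) :
    ∃ c : ℝ, c ≠ 0 ∧ ∀ θ : ℝ,
      c * (Lagrange.nodal (range d) (fun k : ℕ => Real.cos ((2*k+1)*π/(2*d)))).eval (Real.cos θ)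
        = Real.cos (d*θ) := by
  set t : ℕ → ℝ := fun k : ℕ => Real.cos ((2*k+1)*π/(2*d)) with ht
  have hdpos : (0:ℝ) < d := by exact_mod_cast hd
  have hang : ∀ k : ℕ, k ∈ range d → (2*(k:ℝ)+1)*π/(2*d) ∈ Set.Icc 0 π := by
    intro k hk
    rw [Finset.mem_range] at hk
    have hk' : (2*(k:ℝ)+1) ≤ 2*d := by
      have : (k:ℝ) + 1 ≤ d := by exact_mod_cast hk
      linarith
    constructor
    · positivity
    · rw [div_le_iff₀ (by positivity)]
      calc (2*(k:ℝ)+1)*π ≤ (2*d)*π := by nlinarith [Real.pi_pos]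
        _ = π * (2*d) := by ring
  have htinj : Set.InjOn t ↑(Finset.range d) := by
    intro i hi j hj hij
    have h1 := Real.injOn_cos (hang i hi) (hang j hj) hij
    have hpi := Real.pi_pos
    field_simp at h1
    exact_mod_cast (by linarith : (i:ℝ) = j)
  set P := Polynomial.Chebyshev.T ℝ (d:ℤ) with hP
  have hPeval : ∀ θ : ℝ, P.eval (Real.cos θ) = Real.cos (d*θ) := by
    intro θ
    have := Polynomial.Chebyshev.T_real_cos θ (d:ℤ)
    push_cast at this ⊢
    convert this using 2
  have hProot : ∀ k ∈ range d, P.eval (t k) = 0 := by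
    intro k hk
    rw [ht]
    simp only
    rw [hPeval]
    have : (d:ℝ) * ((2*(k:ℝ)+1)*π/(2*d)) = k*π + π/2 := by
      field_simp
    rw [this, Real.cos_add_pi_div_two]
    have : ((k:ℝ)*π) = ((k:ℕ):ℝ)*π := by norm_num
    rw [this, Real.sin_nat_mul_pi, neg_zero]
  have hPne : P ≠ 0 := by
    intro h
    have := hPeval 0
    rw [h] at this
    simp at this
  have hWmonic := Lagrange.nodal_monic (s := range d) (v := t)
  set W := Lagrange.nodal (range d) t with hW
  have hWdeg : W.degree = (d : WithBot ℕ) := by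
    rw [hW, Lagrange.degree_nodal, Finset.card_range]
  have hPdeg_le : P.degree ≤ (d : WithBot ℕ) := by
    refine (Polynomial.degree_le_natDegree).trans ?_
    exact_mod_cast natDegree_T_le d
  have hPdeg : P.degree = (d : WithBot ℕ) := by
    rcases lt_or_eq_of_le hPdeg_le with h | h
    · exfalso
      apply hPne
      refine Polynomial.eq_zero_of_degree_lt_of_eval_index_eq_zero (v := t) _ htinj ?_ hProot
      rwa [Finset.card_range]
    · exact h
  set lc := P.leadingCoeff with hlc
  have hlcne : lc ≠ 0 := Polynomial.leadingCoeff_ne_zero.mpr hPne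
  have hQdeg : (C lc * W).degree = (d : WithBot ℕ) := by
    rw [Polynomial.degree_mul, Polynomial.degree_C hlcne, hWdeg, zero_add]
  have hQlc : (C lc * W).leadingCoeff = lc := by
    rw [Polynomial.leadingCoeff_mul, Polynomial.leadingCoeff_C, hWmonic.leadingCoeff, mul_one]
  have hPQ : P = C lc * W := by
    by_cases hdiff : P - C lc * W = 0
    · exact (sub_eq_zero.mp hdiff)
    · exfalso
      apply hdiff
      refine Polynomial.eq_zero_of_degree_lt_of_eval_index_eq_zero (v := t) _ htinj ?_ ?_
      · rw [Finset.card_range]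
        calc (P - C lc * W).degree < P.degree :=
            Polynomial.degree_sub_lt (hPdeg.trans hQdeg.symm) hPne (hQlc.symm)
          _ ≤ (d : WithBot ℕ) := hPdeg_le
      · intro k hk
        rw [Polynomial.eval_sub, hProot k hk, Polynomial.eval_mul, hW,
          Lagrange.eval_nodal_at_node hk]
        ring
  refine ⟨lc, hlcne, fun θ => ?_⟩
  have := hPeval θ
  rw [hPQ] at this
  simpa using this
set_option maxHeartbeats 2000000 in
private lemma bernstein_core (p : ℝ[X]) (d : ℕ) (hd : 1 ≤ d) (hdeg : p.natDegree ≤ d) (c : ℝ)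
    (hc : c < 1) (hbd : ∀ x ∈ Set.Icc (-1:ℝ) 1, |p.eval x| ≤ c) (θ0 : ℝ)
    (hD : (d:ℝ) < -Real.sin θ0 * p.derivative.eval (Real.cos θ0)) : False := by
  classical
  have hpi := Real.pi_pos
  have hdpos : (0:ℝ) < d := by exact_mod_cast hd
  set f : ℝ → ℝ := fun θ => p.eval (Real.cos θ) with hf
  have hfb : ∀ θ, |f θ| ≤ c := fun θ => hbd _ ⟨Real.neg_one_le_cos θ, Real.cos_le_one θ⟩
  have hc0 : 0 ≤ c := le_trans (abs_nonneg _) (hfb 0)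
  set s0 := f θ0 with hs0def
  have hs0 : |s0| ≤ c := hfb θ0
  have hs0l : -1 < s0 := by have := abs_le.mp hs0; linarith
  have hs0r : s0 < 1 := by have := abs_le.mp hs0; linarith
  set β := Real.arcsin s0 with hβdef
  have hsinβ : Real.sin β = s0 := Real.sin_arcsin (by linarith) (by linarith)
  have hβ1 : -(π/2) < β := Real.neg_pi_div_two_lt_arcsin.mpr hs0l
  have hβ2 : β < π/2 := Real.arcsin_lt_pi_div_two.mpr hs0r
  set c0 := β - d*θ0 with hc0def
  set g : ℝ → ℝ := fun θ => Real.sin (d*θ + c0) with hg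
  set h : ℝ → ℝ := fun θ => f θ - g θ with hh
  have hcont : Continuous h := by
    refine Continuous.sub ?_ ?_
    · exact (Polynomial.continuous p).comp Real.continuous_cos
    · exact Real.continuous_sin.comp ((continuous_const.mul continuous_id).add continuous_const)
  set τ : ℕ → ℝ := fun m => θ0 + (π/2 - β + ((m:ℝ)-1)*π)/d with hτ
  have hτlt : ∀ m : ℕ, τ m < τ (m+1) := by
    intro m
    rw [hτ]
    simp only
    rw [add_lt_add_iff_left, div_lt_div_iff_of_pos_right hdpos]
    push_cast
    nlinarith
  have hτmono : StrictMono τ := strictMono_nat_of_lt_succ hτlt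
  have hτspace : ∀ m : ℕ, τ m = τ 0 + m * (π/d) := by
    intro m
    rw [hτ]
    beta_reduce
    push_cast
    field_simp
    ring
  have hgτ : ∀ m : ℕ, g (τ m) = -(-1:ℝ)^m := by
    intro m
    rw [hg]
    simp only
    have harg : (d:ℝ) * τ m + c0 = -(π/2) + (m:ℤ) * π := by
      rw [hτ, hc0def]
      push_cast
      field_simp
      ring
    rw [harg, Real.sin_add_int_mul_pi]
    push_cast
    simp [Real.sin_neg, Real.sin_pi_div_two]
  have hhτ : ∀ m : ℕ, 0 < (-1:ℝ)^m * h (τ m) := by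
    intro m
    have h1 : h (τ m) = f (τ m) + (-1:ℝ)^m := by
      rw [hh]
      simp only
      rw [hgτ m]
      ring
    have hsq : (-1:ℝ)^m * (-1:ℝ)^m = 1 := by
      rw [← pow_add]
      exact Even.neg_one_pow ⟨m, by ring⟩
    have habs : |(-1:ℝ)^m * f (τ m)| = |f (τ m)| := by
      rw [abs_mul, abs_pow, abs_neg, abs_one, one_pow, one_mul]
    have := hfb (τ m)
    have h2 : -c ≤ (-1:ℝ)^m * f (τ m) := by
      have := neg_abs_le ((-1:ℝ)^m * f (τ m))
      rw [habs] at this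
      linarith [hfb (τ m)]
    rw [h1, mul_add, hsq]
    linarith
  have hz : ∀ m : ℕ, ∃ z ∈ Set.Ioo (τ m) (τ (m+1)), h z = 0 := by
    intro m
    rcases Nat.even_or_odd m with he | ho
    · have h1 : 0 < h (τ m) := by
        have := hhτ m; rwa [he.neg_one_pow, one_mul] at this
      have h2 : h (τ (m+1)) < 0 := by
        have := hhτ (m+1)
        rw [(he.add_one).neg_one_pow] at this
        linarith
      have hsub := intermediate_value_Ioo' (le_of_lt (hτlt m)) hcont.continuousOn
      have hmem : (0:ℝ) ∈ Set.Ioo (h (τ (m+1))) (h (τ m)) := ⟨h2, h1⟩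
      obtain ⟨z, hzmem, hz0⟩ := hsub hmem
      exact ⟨z, hzmem, hz0⟩
    · have h1 : h (τ m) < 0 := by
        have := hhτ m
        rw [ho.neg_one_pow] at this
        linarith
      have h2 : 0 < h (τ (m+1)) := by
        have := hhτ (m+1)
        rwa [(ho.add_one).neg_one_pow, one_mul] at this
      have hsub := intermediate_value_Ioo (le_of_lt (hτlt m)) hcont.continuousOn
      obtain ⟨z, hzmem, hz0⟩ := hsub (⟨h1, h2⟩ : (0:ℝ) ∈ Set.Ioo (h (τ m)) (h (τ (m+1))))
      exact ⟨z, hzmem, hz0⟩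
  choose z hzmem hzzero using hz
  have hθ0mem : θ0 ∈ Set.Ioo (τ 0) (τ 1) := by
    constructor
    · rw [hτ]
      simp only
      have h9 : (π/2 - β + ((0:ℝ)-1)*π)/d < 0 := by
        apply div_neg_of_neg_of_pos _ hdpos
        linarith
      push_cast
      linarith
    · rw [hτ]
      simp only
      have : 0 < (π/2 - β + (((1:ℕ):ℝ)-1)*π)/d := by
        apply div_pos _ hdpos
        push_cast
        linarith
      linarith
  have hhθ0 : h θ0 = 0 := by
    rw [hh]
    simp only
    rw [hg]
    simp only
    have : (d:ℝ)*θ0 + c0 = β := by rw [hc0def]; ring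
    rw [this, hsinβ]
    simp [hs0def]
  have hder : HasDerivAt h (p.derivative.eval (Real.cos θ0) * (-Real.sin θ0) - Real.cos β * d) θ0 := by
    have h1 : HasDerivAt f (p.derivative.eval (Real.cos θ0) * (-Real.sin θ0)) θ0 :=
      (p.hasDerivAt (Real.cos θ0)).comp θ0 (Real.hasDerivAt_cos θ0)
    have h2 : HasDerivAt g (Real.cos β * d) θ0 := by
      have h3 : HasDerivAt (fun θ : ℝ => (d:ℝ)*θ + c0) ((d:ℝ)) θ0 := by
        simpa using ((hasDerivAt_id θ0).const_mul (d:ℝ)).add_const c0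
      have := (Real.hasDerivAt_sin ((d:ℝ)*θ0 + c0)).comp θ0 h3
      have harg : (d:ℝ)*θ0 + c0 = β := by rw [hc0def]; ring
      rw [harg] at this
      exact this
    exact h1.sub h2
  have hderpos : 0 < p.derivative.eval (Real.cos θ0) * (-Real.sin θ0) - Real.cos β * d := by
    have h1 : (d:ℝ) < p.derivative.eval (Real.cos θ0) * (-Real.sin θ0) := by
      calc (d:ℝ) < -Real.sin θ0 * p.derivative.eval (Real.cos θ0) := hD
        _ = p.derivative.eval (Real.cos θ0) * (-Real.sin θ0) := by ring
    nlinarith [Real.cos_le_one β]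
  have hw : ∃ w ∈ Set.Ioo θ0 (τ 1), h w = 0 := by
    have hslope := hasDerivAt_iff_tendsto_slope.mp hder
    have hev : ∀ᶠ x in nhdsWithin θ0 {θ0}ᶜ, 0 < slope h θ0 x :=
      hslope.eventually (eventually_gt_nhds hderpos)
    have hev' : ∀ᶠ x in nhdsWithin θ0 (Set.Ioi θ0), 0 < slope h θ0 x :=
      hev.filter_mono (nhdsWithin_mono θ0 (fun x hx => ne_of_gt hx))
    have hI : Set.Ioo θ0 (τ 1) ∈ nhdsWithin θ0 (Set.Ioi θ0) :=
      Ioo_mem_nhdsGT_of_mem ⟨le_refl θ0, hθ0mem.2⟩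
    obtain ⟨u, hu1, hu2⟩ := (hev'.and (Filter.eventually_of_mem hI (fun x hx => hx))).exists
    have huθ0 : θ0 < u := hu2.1
    have hupos : 0 < h u := by
      have hs : slope h θ0 u = h u / (u - θ0) := by
        rw [slope_def_field, hhθ0]
        rw [sub_zero]
      rw [hs] at hu1
      have hu0 : 0 < u - θ0 := sub_pos.mpr huθ0
      have := mul_pos hu1 hu0
      rwa [div_mul_cancel₀ _ hu0.ne'] at this
    have h2 : h (τ 1) < 0 := by
      have := hhτ 1
      rw [pow_one] at this
      linarith
    have hsub := intermediate_value_Ioo' (le_of_lt hu2.2) hcont.continuousOn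
    obtain ⟨w, hwmem, hw0⟩ := hsub (⟨h2, hupos⟩ : (0:ℝ) ∈ Set.Ioo (h (τ 1)) (h u))
    exact ⟨w, ⟨lt_trans huθ0 hwmem.1, hwmem.2⟩, hw0⟩
  obtain ⟨w, hwmem, hwzero⟩ := hw
  -- enumeration of 2d+1 distinct zeros of h in a window of length 2π
  set ζ : ℕ → ℝ := fun k => if k = 0 then θ0 else if k = 1 then w else z (k-1) with hζ
  have hζ0 : ζ 0 = θ0 := by simp [hζ]
  have hζ1 : ζ 1 = w := by simp [hζ]
  have hζ2 : ∀ k : ℕ, ζ (k+2) = z (k+1) := by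
    intro k
    rw [hζ]
    simp only
    rw [if_neg (by omega), if_neg (by omega)]
    congr 1
  have hζmono : StrictMono ζ := by
    apply strictMono_nat_of_lt_succ
    intro k
    match k with
    | 0 => rw [hζ0, hζ1]; exact hwmem.1
    | 1 =>
      show ζ 1 < ζ (0+2)
      rw [hζ1, hζ2]
      exact lt_trans hwmem.2 (hzmem 1).1
    | (k+2) =>
      show ζ (k+2) < ζ ((k+1)+2)
      rw [hζ2, hζ2]
      exact lt_trans (hzmem (k+1)).2 (hzmem (k+2)).1
  have hζzero : ∀ k : ℕ, h (ζ k) = 0 := by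
    intro k
    match k with
    | 0 => rw [hζ0]; exact hhθ0
    | 1 => rw [hζ1]; exact hwzero
    | (k+2) => rw [hζ2]; exact hzzero (k+1)
  have hζlb : ∀ k : ℕ, τ 0 < ζ k := by
    intro k
    calc τ 0 < ζ 0 := by rw [hζ0]; exact hθ0mem.1
      _ ≤ ζ k := hζmono.monotone (Nat.zero_le k)
  have hτ2d : τ (2*d) = τ 0 + 2*π := by
    rw [hτspace (2*d)]
    push_cast
    field_simp
  have hζub : ∀ k ≤ 2*d, ζ k < τ 0 + 2*π := by
    intro k hk
    have h1 : ζ k ≤ ζ (2*d) := hζmono.monotone hk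
    have h2 : ζ (2*d) < τ (2*d) := by
      have h3 : ζ (2*d-2+2) < τ (2*d-2+2) := by
        rw [hζ2]
        have h4 := (hzmem (2*d-2+1)).2
        rw [show (2*d-2+1)+1 = 2*d-2+2 by omega] at h4
        exact h4
      rwa [show 2*d-2+2 = 2*d by omega] at h3
    rw [hτ2d] at h2
    linarith
  -- the complex polynomial
  obtain ⟨q1, hq1def⟩ : ∃ q : Polynomial ℂ, q = ∑ j ∈ Finset.range (d+1),
      Polynomial.C ((p.coeff j : ℂ) / 2^j) *
        ((Polynomial.X^2+1)^j * Polynomial.X^(d-j)) := ⟨_, rfl⟩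
  obtain ⟨q2, hq2def⟩ : ∃ q : Polynomial ℂ, q = (Polynomial.C (Complex.exp (-(c0:ℂ)*Complex.I))
      - Polynomial.C (Complex.exp ((c0:ℂ)*Complex.I)) * Polynomial.X^(2*d))
      * Polynomial.C (Complex.I/2) := ⟨_, rfl⟩
  obtain ⟨H, hHdef⟩ : ∃ q : Polynomial ℂ, q = q1 - q2 := ⟨_, rfl⟩
  have hHeval : ∀ θ : ℝ, H.eval (Complex.exp (θ*Complex.I))
      = Complex.exp (d*θ*Complex.I) * ((h θ : ℝ) : ℂ) := by
    intro θ
    set zc := Complex.exp ((θ:ℂ)*Complex.I) with hzc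
    have hzd : zc ^ d = Complex.exp ((d:ℂ)*θ*Complex.I) := by
      rw [hzc, ← Complex.exp_nat_mul]
      congr 1
      ring
    have hcosc : zc^2 + 1 = zc * (2 * (Real.cos θ : ℂ)) := by
      have e2 : zc * Complex.exp (-(θ:ℂ)*Complex.I) = 1 := by
        rw [hzc, ← Complex.exp_add, show (θ:ℂ)*Complex.I + -(θ:ℂ)*Complex.I = 0 by ring,
          Complex.exp_zero]
      calc zc^2 + 1 = zc*zc + zc*Complex.exp (-(θ:ℂ)*Complex.I) := by rw [e2]; ring
        _ = zc * (2 * ((Complex.exp ((θ:ℂ)*Complex.I) + Complex.exp (-(θ:ℂ)*Complex.I))/2)) := by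
            rw [hzc]; ring
        _ = zc * (2 * Complex.cos (θ:ℂ)) := by rw [Complex.cos]
        _ = zc * (2 * (Real.cos θ : ℂ)) := by rw [← Complex.ofReal_cos]
    have hq1e : q1.eval zc = Complex.exp ((d:ℂ)*θ*Complex.I) * ((f θ : ℝ) : ℂ) := by
      rw [hq1def, Polynomial.eval_finset_sum]
      have hterm : ∀ j ∈ Finset.range (d+1),
          Polynomial.eval zc (Polynomial.C ((p.coeff j : ℂ) / 2^j) *
            ((Polynomial.X^2+1)^j * Polynomial.X^(d-j)))
          = ((p.coeff j : ℂ) * (Real.cos θ : ℂ)^j) * zc^d := by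
        intro j hj
        have hj' : j ≤ d := Nat.lt_succ_iff.mp (Finset.mem_range.mp hj)
        have hzpow : zc^j * zc^(d-j) = zc^d := by
          rw [← pow_add]
          congr 1
          omega
        simp only [Polynomial.eval_mul, Polynomial.eval_C, Polynomial.eval_pow,
          Polynomial.eval_add, Polynomial.eval_X, Polynomial.eval_one]
        rw [hcosc, mul_pow, ← hzpow]
        have h2j : ((2:ℂ))^j ≠ 0 := pow_ne_zero j two_ne_zero
        field_simp
        ring
      rw [Finset.sum_congr rfl hterm, ← Finset.sum_mul]
      have hfsum : ((f θ : ℝ) : ℂ) = ∑ j ∈ Finset.range (d+1), (p.coeff j : ℂ) * (Real.cos θ : ℂ)^j := by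
        have hsum := Polynomial.eval_eq_sum_range' (Nat.lt_succ_of_le hdeg) (Real.cos θ)
        rw [hf]
        simp only
        rw [hsum]
        push_cast
        rfl
      rw [hfsum, hzd]
      ring
    have hq2e : q2.eval zc = Complex.exp ((d:ℂ)*θ*Complex.I) * ((g θ : ℝ) : ℂ) := by
      rw [hq2def]
      simp only [Polynomial.eval_mul, Polynomial.eval_sub, Polynomial.eval_C,
        Polynomial.eval_pow, Polynomial.eval_X]
      rw [hg]
      simp only
      rw [Complex.ofReal_sin, Complex.sin]
      have e5 : zc^(2*d) = Complex.exp (2*(d:ℂ)*θ*Complex.I) := by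
        rw [hzc, ← Complex.exp_nat_mul]
        congr 1
        push_cast
        ring
      rw [e5]
      rw [show (-((((d:ℝ)*θ + c0 : ℝ)):ℂ) * Complex.I) = -(((d:ℝ)*θ+c0 : ℝ):ℂ)*Complex.I from rfl]
      have e6 : Complex.exp ((d:ℂ)*θ*Complex.I) * Complex.exp (-(((d:ℝ)*θ+c0:ℝ):ℂ)*Complex.I)
          = Complex.exp (-(c0:ℂ)*Complex.I) := by
        rw [← Complex.exp_add]
        congr 1
        push_cast
        ring
      have e7 : Complex.exp ((d:ℂ)*θ*Complex.I) * Complex.exp ((((d:ℝ)*θ+c0:ℝ):ℂ)*Complex.I)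
          = Complex.exp ((c0:ℂ)*Complex.I) * Complex.exp (2*(d:ℂ)*θ*Complex.I) := by
        rw [← Complex.exp_add, ← Complex.exp_add]
        congr 1
        push_cast
        ring
      calc (Complex.exp (-(c0:ℂ)*Complex.I)
            - Complex.exp ((c0:ℂ)*Complex.I) * Complex.exp (2*(d:ℂ)*θ*Complex.I)) * (Complex.I/2)
          = (Complex.exp ((d:ℂ)*θ*Complex.I) * Complex.exp (-(((d:ℝ)*θ+c0:ℝ):ℂ)*Complex.I)
            - Complex.exp ((d:ℂ)*θ*Complex.I) * Complex.exp ((((d:ℝ)*θ+c0:ℝ):ℂ)*Complex.I))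
              * (Complex.I/2) := by rw [e6, e7]
        _ = Complex.exp ((d:ℂ)*θ*Complex.I) *
            ((Complex.exp (-(((d:ℝ)*θ+c0:ℝ):ℂ)*Complex.I)
              - Complex.exp ((((d:ℝ)*θ+c0:ℝ):ℂ)*Complex.I)) * Complex.I / 2) := by ring
    rw [hHdef, Polynomial.eval_sub, hq1e, hq2e, hh]
    have : ((d:ℂ)*θ*Complex.I) = ((d:ℝ):ℂ)*(θ:ℂ)*Complex.I := by norm_num
    push_cast
    ring
  have hHdeg : H.natDegree ≤ 2*d := by
    rw [hHdef]
    refine (Polynomial.natDegree_sub_le _ _).trans ?_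
    rw [max_le_iff]
    constructor
    · rw [hq1def]
      refine Polynomial.natDegree_sum_le_of_forall_le _ _ fun j hj => ?_
      have hj' : j ≤ d := Nat.lt_succ_iff.mp (Finset.mem_range.mp hj)
      refine (Polynomial.natDegree_C_mul_le _ _).trans ?_
      refine (Polynomial.natDegree_mul_le).trans ?_
      have h1 : ((Polynomial.X^2+1 : Polynomial ℂ)^j).natDegree ≤ 2*j := by
        refine (Polynomial.natDegree_pow_le).trans ?_
        have : (Polynomial.X^2+1 : Polynomial ℂ).natDegree ≤ 2 := by
          refine (Polynomial.natDegree_add_le _ _).trans ?_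
          simp [Polynomial.natDegree_X_pow]
        nlinarith
      have h2 : ((Polynomial.X : Polynomial ℂ)^(d-j)).natDegree ≤ d - j := by
        simp [Polynomial.natDegree_X_pow]
      omega
    · rw [hq2def]
      refine (Polynomial.natDegree_mul_le).trans ?_
      have h1 : ((Polynomial.C (Complex.exp (-(c0:ℂ)*Complex.I))
          - Polynomial.C (Complex.exp ((c0:ℂ)*Complex.I)) * Polynomial.X^(2*d))).natDegree ≤ 2*d := by
        refine (Polynomial.natDegree_sub_le _ _).trans ?_
        rw [max_le_iff]
        constructor
        · simp
        · refine (Polynomial.natDegree_C_mul_le _ _).trans ?_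
          simp [Polynomial.natDegree_X_pow]
      have h2 : (Polynomial.C (Complex.I/2)).natDegree = 0 := Polynomial.natDegree_C _
      omega
  -- the root set
  set s : Finset ℂ := Finset.image (fun k => Complex.exp ((ζ k : ℂ)*Complex.I))
      (Finset.range (2*d+1)) with hsdef
  have hinj : Set.InjOn (fun k => Complex.exp ((ζ k : ℂ)*Complex.I)) ↑(Finset.range (2*d+1)) := by
    intro i hi j hj hij
    simp only [Finset.coe_range, Set.mem_Iio] at hi hj
    obtain ⟨n, hn⟩ := Complex.exp_eq_exp_iff_exists_int.mp hij
    have h2 : ((ζ i - ζ j - n*(2*π) : ℝ) : ℂ) * Complex.I = 0 := by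
      push_cast
      linear_combination hn
    have h3 : ((ζ i - ζ j - n*(2*π) : ℝ) : ℂ) = 0 :=
      (mul_eq_zero.mp h2).resolve_right Complex.I_ne_zero
    have h4 : ζ i - ζ j - n*(2*π) = 0 := by exact_mod_cast h3
    have hib : τ 0 < ζ i ∧ ζ i < τ 0 + 2*π := ⟨hζlb i, hζub i (by omega)⟩
    have hjb : τ 0 < ζ j ∧ ζ j < τ 0 + 2*π := ⟨hζlb j, hζub j (by omega)⟩
    have hn0 : n = 0 := by
      by_contra hne
      have : (1:ℝ) ≤ |(n:ℝ)| := by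
        rw [← Int.cast_abs]
        exact_mod_cast Int.one_le_abs (by exact_mod_cast hne)
      have habs : |(n:ℝ)*(2*π)| < 2*π := by
        rw [show (n:ℝ)*(2*π) = ζ i - ζ j from by linarith]
        rw [abs_lt]
        constructor <;> linarith [hib.1, hib.2, hjb.1, hjb.2]
      rw [abs_mul, abs_of_pos (by linarith : (0:ℝ) < 2*π)] at habs
      nlinarith
    rw [hn0] at h4
    push_cast at h4
    exact hζmono.injective (by linarith : ζ i = ζ j)
  have hcard : #s = 2*d+1 := by
    rw [hsdef, Finset.card_image_of_injOn hinj, Finset.card_range]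
  have hH0 : H = 0 := by
    refine Polynomial.eq_zero_of_natDegree_lt_card_of_eval_eq_zero' H s ?_ ?_
    · intro x hx
      rw [hsdef, Finset.mem_image] at hx
      obtain ⟨k, hk, rfl⟩ := hx
      rw [hHeval (ζ k), hζzero k]
      simp
    · rw [hcard]
      omega
  have hfinal := hHeval (τ 1)
  rw [hH0] at hfinal
  simp only [Polynomial.eval_zero] at hfinal
  have hhτ1 : h (τ 1) < 0 := by
    have := hhτ 1
    rw [pow_one] at this
    linarith
  rcases mul_eq_zero.mp hfinal.symm with hcase | hcase
  · exact Complex.exp_ne_zero _ hcase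
  · have : h (τ 1) = 0 := by exact_mod_cast hcase
    linarith

private lemma bernstein_pt (p : ℝ[X]) (hd : 1 ≤ p.natDegree)
    (hbd : ∀ x ∈ Set.Icc (-1:ℝ) 1, |p.eval x| ≤ 1) (θ : ℝ) :
    |Real.sin θ * p.derivative.eval (Real.cos θ)| ≤ p.natDegree := by
  set d := p.natDegree with hdd
  by_contra hcon
  push_neg at hcon
  set D : ℝ := -Real.sin θ * p.derivative.eval (Real.cos θ) with hD
  have hDabs : (d:ℝ) < |D| := by
    rw [hD, neg_mul, abs_neg]
    exact hcon
  have hDne : D ≠ 0 := by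
    intro h
    rw [h] at hDabs
    simp at hDabs
    have : (0:ℝ) < d := by exact_mod_cast hd
    linarith
  set σ : ℝ := if 0 < D then 1 else -1 with hσ
  have hσD : σ * D = |D| := by
    rcases lt_trichotomy 0 D with h | h | h
    · rw [hσ, if_pos h, one_mul, abs_of_pos h]
    · exact absurd h.symm hDne
    · rw [hσ, if_neg (by linarith), neg_one_mul, abs_of_neg h]
  set a : ℝ := σ * ((d + |D|)/(2*|D|)) with ha
  have hDpos : 0 < |D| := abs_pos.mpr hDne
  have hdpos : (0:ℝ) < d := by exact_mod_cast hd
  have hfrac_pos : 0 < (d + |D|)/(2*|D|) := by positivity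
  have hfrac_lt : (d + |D|)/(2*|D|) < 1 := by
    rw [div_lt_one (by positivity)]
    linarith
  have hane : a ≠ 0 := by
    rw [ha]
    rcases lt_trichotomy 0 D with h | h | h
    · rw [hσ, if_pos h, one_mul]; exact hfrac_pos.ne'
    · exact absurd h.symm hDne
    · rw [hσ, if_neg (by linarith)]
      intro hcontra
      have := neg_eq_zero.mp (by linarith [hcontra] : -( (d + |D|)/(2*|D|)) = 0)
      linarith [hfrac_pos]
  set q : ℝ[X] := Polynomial.C a * p with hq
  have hqdeg : q.natDegree ≤ d := by
    rw [hq, Polynomial.natDegree_C_mul hane]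
  have habs_a : |a| = (d + |D|)/(2*|D|) := by
    rw [ha, abs_mul]
    have : |σ| = 1 := by
      rcases lt_trichotomy 0 D with h | h | h
      · rw [hσ, if_pos h]; norm_num
      · exact absurd h.symm hDne
      · rw [hσ, if_neg (by linarith)]; norm_num
    rw [this, one_mul, abs_of_pos hfrac_pos]
  have hqbd : ∀ x ∈ Set.Icc (-1:ℝ) 1, |q.eval x| ≤ (d + |D|)/(2*|D|) := by
    intro x hx
    rw [hq, Polynomial.eval_mul, Polynomial.eval_C, abs_mul, habs_a]
    have := hbd x hx
    nlinarith [abs_nonneg (p.eval x), hfrac_pos]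
  have hqD : (d:ℝ) < -Real.sin θ * q.derivative.eval (Real.cos θ) := by
    rw [hq, Polynomial.derivative_C_mul, Polynomial.eval_mul, Polynomial.eval_C]
    have : -Real.sin θ * (a * p.derivative.eval (Real.cos θ))
        = ((d + |D|)/(2*|D|)) * (σ * D) := by
      rw [hD, ha]; ring
    rw [this, hσD]
    rw [div_mul_eq_mul_div, lt_div_iff₀ (by positivity)]
    nlinarith
  exact bernstein_core q d hd hqdeg _ hfrac_lt hqbd θ hqD

private lemma markov_pos (p : ℝ[X]) (hd : 1 ≤ p.natDegree)
    (hbd : ∀ x ∈ Set.Icc (-1:ℝ) 1, |p.eval x| ≤ 1) (x : ℝ)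
    (hx1 : Real.cos (π/(2*p.natDegree)) < x) (hx2 : x ≤ 1) :
    |p.derivative.eval x| ≤ (p.natDegree : ℝ)^2 := by
  classical
  set d := p.natDegree with hdd
  have hdpos : (0:ℝ) < d := by exact_mod_cast hd
  set t : ℕ → ℝ := fun k : ℕ => Real.cos ((2*k+1)*π/(2*d)) with ht
  set Θ : ℕ → ℝ := fun k : ℕ => (2*k+1)*π/(2*d) with hΘ
  have hpi := Real.pi_pos
  have hang : ∀ k ∈ range d, Θ k ∈ Set.Icc 0 π := by
    intro k hk
    rw [Finset.mem_range] at hk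
    have hk' : (2*(k:ℝ)+1) ≤ 2*d := by
      have : (k:ℝ) + 1 ≤ d := by exact_mod_cast hk
      linarith
    constructor
    · rw [hΘ]; positivity
    · rw [hΘ]
      simp only
      rw [div_le_iff₀ (by positivity)]
      nlinarith
  have hangpos : ∀ k ∈ range d, 0 < Θ k := by
    intro k hk
    rw [hΘ]; positivity
  have hanglt : ∀ k ∈ range d, Θ k < π := by
    intro k hk
    rw [Finset.mem_range] at hk
    have hk' : (2*(k:ℝ)+1) < 2*d := by
      have : (k:ℝ) + 1 ≤ d := by exact_mod_cast hk
      linarith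
    rw [hΘ]
    simp only
    rw [div_lt_iff₀ (by positivity)]
    nlinarith
  have hsinpos : ∀ k ∈ range d, 0 < Real.sin (Θ k) :=
    fun k hk => Real.sin_pos_of_pos_of_lt_pi (hangpos k hk) (hanglt k hk)
  have htinj : Set.InjOn t ↑(range d) := by
    intro i hi j hj hij
    simp only [Finset.coe_range, Set.mem_Iio] at hi hj
    have h1 := Real.injOn_cos (hang i (Finset.mem_range.mpr hi)) (hang j (Finset.mem_range.mpr hj)) hij
    rw [hΘ] at h1
    simp only at h1
    field_simp at h1
    exact_mod_cast (by linarith : (i:ℝ) = j)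
  have hxgt : ∀ k ∈ range d, t k < x := by
    intro k hk
    refine lt_of_le_of_lt ?_ hx1
    rw [ht]
    refine Real.cos_le_cos_of_nonneg_of_le_pi (by positivity) ((hang k hk).2) ?_
    have h0 : (0:ℝ) ≤ (k:ℝ) := Nat.cast_nonneg k
    gcongr
    nlinarith
  obtain ⟨c, hcne, hcW⟩ := cheb_nodal d hd
  set W := Lagrange.nodal (range d) t with hW
  have hWD : ∀ θ : ℝ, c * ((derivative W).eval (Real.cos θ)) * Real.sin θ
      = d * Real.sin (d*θ) := by
    intro θ
    have h1 : HasDerivAt (fun θ : ℝ => c * W.eval (Real.cos θ))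
        (c * ((derivative W).eval (Real.cos θ) * -Real.sin θ)) θ :=
      (((W.hasDerivAt (Real.cos θ)).comp θ (Real.hasDerivAt_cos θ))).const_mul c
    have h2 : HasDerivAt (fun θ : ℝ => Real.cos ((d:ℝ)*θ)) (-Real.sin ((d:ℝ)*θ) * d) θ := by
      simpa [Function.comp_def] using (Real.hasDerivAt_cos ((d:ℝ)*θ)).comp θ ((hasDerivAt_id θ).const_mul (d:ℝ))
    have heq : (fun θ : ℝ => c * W.eval (Real.cos θ)) = fun θ : ℝ => Real.cos ((d:ℝ)*θ) :=
      funext hcW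
    rw [heq] at h1
    have h3 := h1.unique h2
    nlinarith [h3]
  have hT'bd : ∀ y ∈ Set.Icc (-1:ℝ) 1, |c * (derivative W).eval y| ≤ (d:ℝ)^2 := by
    have hclosed : IsClosed {y : ℝ | |c * (derivative W).eval y| ≤ (d:ℝ)^2} := by
      have hcont : Continuous fun y : ℝ => |c * (derivative W).eval y| :=
        (continuous_const.mul (Polynomial.continuous _)).abs
      exact isClosed_le hcont continuous_const
    have hIoo : Set.Ioo (-1:ℝ) 1 ⊆ {y : ℝ | |c * (derivative W).eval y| ≤ (d:ℝ)^2} := by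
      intro y hy
      have hy1 : -1 ≤ y := le_of_lt hy.1
      have hy2 : y ≤ 1 := le_of_lt hy.2
      set θ := Real.arccos y with hθ
      have hcosθ : Real.cos θ = y := Real.cos_arccos hy1 hy2
      have hθpos : 0 < θ := Real.arccos_pos.mpr hy.2
      have hθlt : θ < π := by
        refine lt_of_le_of_ne (Real.arccos_le_pi y) fun h => ?_
        have := Real.arccos_eq_pi.mp h
        linarith [hy.1]
      have hsθ : 0 < Real.sin θ := Real.sin_pos_of_pos_of_lt_pi hθpos hθlt
      have h1 := hWD θ
      rw [hcosθ] at h1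
      have h2 : |c * (derivative W).eval y| * Real.sin θ = (d:ℝ) * |Real.sin (d*θ)| := by
        rw [← abs_of_pos hsθ, ← abs_mul, h1, abs_mul, Nat.abs_cast]
      have h3 : |Real.sin ((d:ℕ)*θ)| ≤ (d:ℝ) * Real.sin θ := by
        have := abs_sin_nat_mul_le d θ
        rwa [abs_of_pos hsθ] at this
      rw [Set.mem_setOf_eq, ← mul_le_mul_iff_of_pos_right hsθ]
      calc |c * (derivative W).eval y| * Real.sin θ = (d:ℝ) * |Real.sin (d*θ)| := h2
        _ ≤ (d:ℝ) * ((d:ℝ) * Real.sin θ) := by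
            refine mul_le_mul_of_nonneg_left ?_ (le_of_lt hdpos)
            exact_mod_cast h3
        _ = (d:ℝ)^2 * Real.sin θ := by ring
    have hsub : Set.Icc (-1:ℝ) 1 ⊆ {y : ℝ | |c * (derivative W).eval y| ≤ (d:ℝ)^2} := by
      rw [← closure_Ioo (by norm_num : (-1:ℝ) ≠ 1)]
      exact hclosed.closure_subset_iff.mpr hIoo
    exact fun y hy => hsub hy
  have hWnode : ∀ k ∈ range d, (derivative W).eval (t k)
      = ∏ j ∈ (range d).erase k, (t k - t j) := by
    intro k hk
    rw [hW, Lagrange.eval_nodal_derivative_eval_node_eq hk, Lagrange.eval_nodal]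
  have hcosΘ : ∀ k : ℕ, Real.cos (Θ k) = t k := fun k => rfl
  have hnodeabs : ∀ k ∈ range d, |c * (derivative W).eval (t k)| = d / Real.sin (Θ k) := by
    intro k hk
    have h1 := hWD (Θ k)
    rw [hcosΘ k] at h1
    have hsin : |Real.sin ((d:ℝ) * Θ k)| = 1 := by
      have harg : (d:ℝ) * Θ k = π/2 + (k:ℤ) * π := by
        rw [hΘ]; push_cast; field_simp; ring
      rw [harg, Real.sin_add_int_mul_pi, Real.sin_pi_div_two]
      simp
    have h2 : |c * (derivative W).eval (t k)| * Real.sin (Θ k) = (d:ℝ) := by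
      rw [← abs_of_pos (hsinpos k hk), ← abs_mul, h1, abs_mul, Nat.abs_cast, hsin, mul_one]
    rw [eq_div_iff (hsinpos k hk).ne']
    exact h2
  have hpnode : ∀ k ∈ range d, |p.derivative.eval (t k)| ≤ |c * (derivative W).eval (t k)| := by
    intro k hk
    rw [hnodeabs k hk]
    have hb := bernstein_pt p hd hbd (Θ k)
    rw [abs_mul, abs_of_pos (hsinpos k hk)] at hb
    rw [le_div_iff₀ (hsinpos k hk)]
    rw [hcosΘ k] at hb
    calc |p.derivative.eval (t k)| * Real.sin (Θ k)
        = Real.sin (Θ k) * |p.derivative.eval (t k)| := by ring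
      _ ≤ d := hb
  have hpne : p ≠ 0 := fun h => by simp [h, Polynomial.natDegree_zero] at hdd; omega
  have hdeg' : p.derivative.degree < (#(range d) : WithBot ℕ) := by
    rw [Finset.card_range]
    calc p.derivative.degree < p.degree := Polynomial.degree_derivative_lt hpne
      _ ≤ (d : WithBot ℕ) := by exact_mod_cast Polynomial.degree_le_natDegree
  have hinterp := Lagrange.eq_interpolate htinj hdeg'
  have hevalx : p.derivative.eval x
      = ∑ k ∈ range d, p.derivative.eval (t k) * (Lagrange.basis (range d) t k).eval x := by
    conv_lhs => rw [hinterp]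
    rw [Lagrange.interpolate_apply, Polynomial.eval_finset_sum]
    exact Finset.sum_congr rfl fun k hk => by rw [Polynomial.eval_mul, Polynomial.eval_C]
  have hbasis : ∀ k ∈ range d,
      |p.derivative.eval (t k) * (Lagrange.basis (range d) t k).eval x|
        ≤ |c| * ∏ j ∈ (range d).erase k, (x - t j) := by
    intro k hk
    have hxj : ∀ j ∈ (range d).erase k, 0 < x - t j := fun j hj =>
      sub_pos.mpr (hxgt j (Finset.mem_of_mem_erase hj))
    have htkj : ∀ j ∈ (range d).erase k, t k - t j ≠ 0 := by
      intro j hj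
      obtain ⟨hjk, hjmem⟩ := Finset.mem_erase.mp hj
      exact sub_ne_zero_of_ne fun h => hjk (htinj hjmem hk h.symm)
    have hbe : |(Lagrange.basis (range d) t k).eval x|
        = (∏ j ∈ (range d).erase k, |t k - t j|)⁻¹ * ∏ j ∈ (range d).erase k, (x - t j) := by
      rw [Lagrange.basis, Polynomial.eval_prod, Finset.abs_prod]
      rw [← Finset.prod_inv_distrib, ← Finset.prod_mul_distrib]
      refine Finset.prod_congr rfl fun j hj => ?_
      rw [Lagrange.basisDivisor]
      simp only [Polynomial.eval_mul, Polynomial.eval_C, Polynomial.eval_sub, Polynomial.eval_X]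
      rw [abs_mul, abs_inv, abs_of_pos (hxj j hj)]
    have hple : |p.derivative.eval (t k)| ≤ |c| * ∏ j ∈ (range d).erase k, |t k - t j| := by
      have := hpnode k hk
      rwa [hWnode k hk, abs_mul, Finset.abs_prod] at this
    have hprodpos : 0 < ∏ j ∈ (range d).erase k, |t k - t j| :=
      Finset.prod_pos fun j hj => abs_pos.mpr (htkj j hj)
    have hxprod : 0 ≤ ∏ j ∈ (range d).erase k, (x - t j) :=
      Finset.prod_nonneg fun j hj => (hxj j hj).le
    rw [abs_mul, hbe]
    calc |p.derivative.eval (t k)| * ((∏ j ∈ (range d).erase k, |t k - t j|)⁻¹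
            * ∏ j ∈ (range d).erase k, (x - t j))
        ≤ (|c| * ∏ j ∈ (range d).erase k, |t k - t j|) * ((∏ j ∈ (range d).erase k, |t k - t j|)⁻¹
            * ∏ j ∈ (range d).erase k, (x - t j)) := by
          refine mul_le_mul_of_nonneg_right hple ?_
          exact mul_nonneg (inv_nonneg.mpr hprodpos.le) hxprod
      _ = |c| * ∏ j ∈ (range d).erase k, (x - t j) := by
          rw [mul_assoc, mul_inv_cancel_left₀ hprodpos.ne']
  have hW'x : (derivative W).eval x = ∑ k ∈ range d, ∏ j ∈ (range d).erase k, (x - t j) := by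
    rw [hW, Lagrange.derivative_nodal, Polynomial.eval_finset_sum]
    exact Finset.sum_congr rfl fun k hk => Lagrange.eval_nodal
  have hW'xnn : 0 ≤ (derivative W).eval x := by
    rw [hW'x]
    refine Finset.sum_nonneg fun k hk => Finset.prod_nonneg fun j hj => ?_
    exact (sub_pos.mpr (hxgt j (Finset.mem_of_mem_erase hj))).le
  have hxm1 : (-1:ℝ) ≤ x := le_of_lt (lt_of_le_of_lt (Real.neg_one_le_cos _) hx1)
  calc |p.derivative.eval x|
      = |∑ k ∈ range d, p.derivative.eval (t k) * (Lagrange.basis (range d) t k).eval x| := by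
        rw [hevalx]
    _ ≤ ∑ k ∈ range d, |p.derivative.eval (t k) * (Lagrange.basis (range d) t k).eval x| :=
        Finset.abs_sum_le_sum_abs _ _
    _ ≤ ∑ k ∈ range d, |c| * ∏ j ∈ (range d).erase k, (x - t j) :=
        Finset.sum_le_sum hbasis
    _ = |c| * (derivative W).eval x := by rw [hW'x, Finset.mul_sum]
    _ = |c * (derivative W).eval x| := by rw [abs_mul, abs_of_nonneg hW'xnn]
    _ ≤ (d:ℝ)^2 := hT'bd x ⟨hxm1, hx2⟩

theorem markov_brothers (p : Polynomial ℝ)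
    (hbd : ∀ x ∈ Set.Icc (-1 : ℝ) 1, |p.eval x| ≤ 1) :
    ∀ x ∈ Set.Icc (-1 : ℝ) 1, |p.derivative.eval x| ≤ (p.natDegree : ℝ) ^ 2 := by
  intro x hx
  by_cases hd0 : p.natDegree = 0
  · have hp : p = Polynomial.C (p.coeff 0) := Polynomial.eq_C_of_natDegree_eq_zero hd0
    rw [hp]
    simp
  · have hd : 1 ≤ p.natDegree := Nat.one_le_iff_ne_zero.mpr hd0
    set d := p.natDegree with hdd
    have hdpos : (0:ℝ) < d := by exact_mod_cast hd
    have hpi := Real.pi_pos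
    have hsinlb : 1/(d:ℝ) ≤ Real.sin (π/(2*d)) := by
      have h1 : 2/π * (π/(2*d)) ≤ Real.sin (π/(2*d)) := by
        refine Real.mul_le_sin (by positivity) ?_
        rw [div_le_div_iff₀ (by positivity) (by norm_num)]
        nlinarith [(by exact_mod_cast hd : (1:ℝ) ≤ (d:ℝ))]
      have h2 : 2/π * (π/(2*d)) = 1/d := by field_simp
      linarith [h1, h2.symm.le]
    have hcos_lt_one : Real.cos (π/(2*d)) < 1 := by
      have hs := Real.sin_sq_add_cos_sq (π/(2*d))
      have hdinv : 0 < 1/(d:ℝ) := by positivity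
      nlinarith [hsinlb, Real.cos_le_one (π/(2*d))]
    by_cases hcase : |x| ≤ Real.cos (π/(2*d))
    · -- interior case via Bernstein
      have hcos_nonneg : 0 ≤ Real.cos (π/(2*d)) := by
        refine Real.cos_nonneg_of_mem_Icc ⟨?_, ?_⟩
        · have h0 : (0:ℝ) ≤ π/(2*d) := by positivity
          linarith
        · rw [div_le_div_iff₀ (by positivity) (by norm_num)]
          nlinarith [(by exact_mod_cast hd : (1:ℝ) ≤ (d:ℝ))]
      have hx1' : -1 ≤ x := hx.1
      have hx2' : x ≤ 1 := hx.2
      set θ := Real.arccos x with hθ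
      have hcosθ : Real.cos θ = x := Real.cos_arccos hx1' hx2'
      have hsinθ : Real.sin θ = Real.sqrt (1 - x^2) := Real.sin_arccos x
      have hsin_ge : 1/(d:ℝ) ≤ Real.sin θ := by
        rw [hsinθ]
        have hx2cos : x^2 ≤ (Real.cos (π/(2*d)))^2 := by
          rw [← sq_abs x]
          exact pow_le_pow_left₀ (abs_nonneg x) hcase 2
        have h1 : (Real.sin (π/(2*d)))^2 ≤ 1 - x^2 := by
          have := Real.sin_sq_add_cos_sq (π/(2*d))
          nlinarith
        calc 1/(d:ℝ) ≤ Real.sin (π/(2*d)) := hsinlb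
          _ = Real.sqrt ((Real.sin (π/(2*d)))^2) := by
              rw [Real.sqrt_sq ((by positivity : (0:ℝ) ≤ 1/(d:ℝ)).trans hsinlb)]
          _ ≤ Real.sqrt (1 - x^2) := Real.sqrt_le_sqrt h1
      have hb := bernstein_pt p hd hbd θ
      rw [hcosθ, abs_mul] at hb
      have hsinpos : 0 < Real.sin θ := lt_of_lt_of_le (by positivity) hsin_ge
      rw [abs_of_pos hsinpos] at hb
      have : (1/(d:ℝ)) * |p.derivative.eval x| ≤ (d:ℝ) := by
        calc (1/(d:ℝ)) * |p.derivative.eval x| ≤ Real.sin θ * |p.derivative.eval x| := by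
              refine mul_le_mul_of_nonneg_right hsin_ge (abs_nonneg _)
          _ ≤ d := hb
      calc |p.derivative.eval x| = (d:ℝ) * ((1/(d:ℝ)) * |p.derivative.eval x|) := by
            field_simp
        _ ≤ (d:ℝ) * d := by nlinarith [abs_nonneg (p.derivative.eval x)]
        _ = (d:ℝ)^2 := by ring
    · push_neg at hcase
      rcases le_or_gt 0 x with hx0 | hx0
      · have : Real.cos (π/(2*d)) < x := by rwa [abs_of_nonneg hx0] at hcase
        exact markov_pos p hd hbd x this hx.2
      · set q : ℝ[X] := p.comp (-Polynomial.X) with hqdef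
        have hqdeg : q.natDegree = d := by
          rw [hqdef, Polynomial.natDegree_comp]
          simp [hdd]
        have hqbd : ∀ y ∈ Set.Icc (-1:ℝ) 1, |q.eval y| ≤ 1 := by
          intro y hy
          rw [hqdef, Polynomial.eval_comp]
          simp only [Polynomial.eval_neg, Polynomial.eval_X]
          exact hbd (-y) ⟨by linarith [hy.2], by linarith [hy.1]⟩
        have hqd : 1 ≤ q.natDegree := by rw [hqdeg]; exact hd
        have harg : Real.cos (π/(2*q.natDegree)) < -x := by
          rw [hqdeg]
          rwa [abs_of_neg hx0] at hcase
        have hx1q : -x ≤ 1 := by linarith [hx.1]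
        have := markov_pos q hqd hqbd (-x) harg hx1q
        rw [hqdeg] at this
        have hqderiv : q.derivative.eval (-x) = - p.derivative.eval x := by
          rw [hqdef, Polynomial.derivative_comp]
          simp
        rwa [hqderiv, abs_neg] at this
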